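/- arXiv:2006.15225 — 2 statements merged into one kernel-verified Lean document; each statement's English description precedes it below -/
import Mathlib

section
/- For all integers n ≥ 3 and 2 ≤ K ≤ n−1, the affine hull of RCut^{=K}_n is the hyperplane {X ∈ ℝ^{n(n−1)/2} : ∑_{1≤i<j≤n} X_{ij} = (n−K)/2}; in particular dim(RCut^{=K}_n) = n(n−1)/2 − 1. -/
/-- Index set for the pairs `1 ≤ i < j ≤ n`. -/
abbrev PairIdx (n : ℕ) := {p : Fin n × Fin n // p.1 < p.2}

/-- The space `ℝ^{n(n-1)/2}` of vectors indexed by pairs `i < j`. -/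
abbrev CutSpace (n : ℕ) := PairIdx n → ℝ

/-- The ratio-cut vector of the partition of `[n]` induced by the cluster
assignment `c : Fin n → Fin K` (such assignments describe exactly the partitions
of `[n]` into at most `K` nonempty clusters): the entry at a pair `i < j` is
`1/|Γ|` if `i, j` lie in the same cluster `Γ` and `0` otherwise. -/
noncomputable def cutVec (n K : ℕ) (c : Fin n → Fin K) : CutSpace n := fun p =>
  if c p.1.1 = c p.1.2 then
    (1 : ℝ) / ((Finset.univ.filter fun i => c i = c p.1.1).card : ℝ)
  else 0

/-- The ratio-cut polytope `RCut^K_n`: convex hull of the ratio-cut vectors of all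
partitions of `[n]` into at most `K` nonempty clusters. -/
def RCut (n K : ℕ) : Set (CutSpace n) :=
  convexHull ℝ {X | ∃ c : Fin n → Fin K, X = cutVec n K c}

/-- `RCut^{=K}_n`: convex hull of the ratio-cut vectors of all partitions of `[n]`
into exactly `K` nonempty clusters (i.e. surjective cluster assignments). -/
def RCutEq (n K : ℕ) : Set (CutSpace n) :=
  convexHull ℝ {X | ∃ c : Fin n → Fin K, Function.Surjective c ∧ X = cutVec n K c}

/-- Symmetric entry access: `ent X i j = X_{ij}` for `i ≠ j`, with `X_{ji} = X_{ij}`. -/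
noncomputable def ent {n : ℕ} (X : CutSpace n) (i j : Fin n) : ℝ :=
  if h : i < j then X ⟨(i, j), h⟩ else if h' : j < i then X ⟨(j, i), h'⟩ else 0

/-- `∑_{i,j ∈ T, i < j} X_{ij}`. -/
noncomputable def pairSumOn {n : ℕ} (X : CutSpace n) (T : Finset (Fin n)) : ℝ :=
  ∑ p : PairIdx n, if p.1.1 ∈ T ∧ p.1.2 ∈ T then X p else 0

/-- The polyhedral relaxation `RMet^K_n` of the ratio-cut polytope, cut out by the
facet-defining inequalities of Propositions 2-4 of the paper. -/
def RMet (n K : ℕ) : Set (CutSpace n) :=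
  {X | ((n : ℝ) - K) / 2 ≤ ∑ p : PairIdx n, X p ∧
    (∀ l : Fin n, ∀ T : Finset (Fin n), l ∉ T → 2 ≤ T.card → T.card ≤ K →
      2 * ∑ j ∈ T, ent X l j + ∑ j ∈ Finset.univ \ insert l T, ent X l j
        ≤ 1 + pairSumOn X T) ∧
    ∀ p : PairIdx n, 0 ≤ X p}

/-- The polyhedral relaxation `RMet^{=K}_n`: same constraints as `RMet^K_n` with the
first inequality replaced by an equality. -/
def RMetEq (n K : ℕ) : Set (CutSpace n) :=
  {X | (∑ p : PairIdx n, X p = ((n : ℝ) - K) / 2) ∧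
    (∀ l : Fin n, ∀ T : Finset (Fin n), l ∉ T → 2 ≤ T.card → T.card ≤ K →
      2 * ∑ j ∈ T, ent X l j + ∑ j ∈ Finset.univ \ insert l T, ent X l j
        ≤ 1 + pairSumOn X T) ∧
    ∀ p : PairIdx n, 0 ≤ X p}

open Finset

lemma pair_sum_eq (n : ℕ) (g : Fin n → Fin n → ℝ) (hsymm : ∀ i j, g i j = g j i)
    (hdiag : ∀ i, g i i = 0) :
    ∑ p : PairIdx n, g p.1.1 p.1.2 = (∑ i : Fin n, ∑ j : Fin n, g i j) / 2 := by
  have key : ∑ i : Fin n, ∑ j : Fin n, g i j = 2 * ∑ p : PairIdx n, g p.1.1 p.1.2 := by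
    rw [← Fintype.sum_prod_type' (f := fun i j => g i j)]
    have hsplit : (univ : Finset (Fin n × Fin n)) =
        ((univ.filter fun p : Fin n × Fin n => p.1 < p.2) ∪
          (univ.filter fun p : Fin n × Fin n => p.2 < p.1)) ∪
          (univ.filter fun p : Fin n × Fin n => p.1 = p.2) := by
      ext p; simp; rcases lt_trichotomy p.1 p.2 with h|h|h <;> simp [h]
    rw [hsplit, Finset.sum_union, Finset.sum_union]
    · have h0 : ∑ p ∈ univ.filter fun p : Fin n × Fin n => p.1 = p.2, g p.1 p.2 = 0 := by
        apply Finset.sum_eq_zero; intro p hp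
        simp at hp; rw [hp, hdiag]
      have h2 : ∑ p ∈ univ.filter (fun p : Fin n × Fin n => p.2 < p.1), g p.1 p.2
          = ∑ p ∈ univ.filter (fun p : Fin n × Fin n => p.1 < p.2), g p.1 p.2 := by
        apply Finset.sum_nbij' (fun p => (p.2, p.1)) (fun p => (p.2, p.1)) <;>
          simp +contextual [hsymm]
      have h3 : ∑ p ∈ univ.filter (fun p : Fin n × Fin n => p.1 < p.2), g p.1 p.2
          = ∑ p : PairIdx n, g p.1.1 p.1.2 :=
        Finset.sum_subtype _ (fun x => by simp) (fun p : Fin n × Fin n => g p.1 p.2)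
      rw [h0, h2, h3]; ring
    · rw [Finset.disjoint_filter]; intro p _ h; exact asymm h
    · rw [Finset.disjoint_union_left]
      exact ⟨by rw [Finset.disjoint_filter]; intro p _ h; exact ne_of_lt h,
        by rw [Finset.disjoint_filter]; intro p _ h; exact (ne_of_gt h)⟩
  rw [key]; ring

lemma cutVec_sum (n K : ℕ) (c : Fin n → Fin K) (hc : Function.Surjective c) :
    ∑ p : PairIdx n, cutVec n K c p = ((n:ℝ) - K) / 2 := by
  set g : Fin n → Fin n → ℝ := fun i j =>
    if c i = c j ∧ i ≠ j then 1 / ((univ.filter fun x => c x = c i).card : ℝ) else 0 with hg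
  have hcv : ∀ p : PairIdx n, cutVec n K c p = g p.1.1 p.1.2 := by
    intro p
    have hne : p.1.1 ≠ p.1.2 := Fin.ne_of_lt p.2
    simp only [cutVec, hg]
    by_cases h : c p.1.1 = c p.1.2 <;> simp [h, hne]
  have hsymm : ∀ i j, g i j = g j i := by
    intro i j; simp only [hg]
    by_cases h : c i = c j
    · have hcong : (univ.filter fun x => c x = c i) = (univ.filter fun x => c x = c j) := by
        ext x; simp [h]
      rw [hcong]
      exact if_congr ⟨fun ⟨a, b⟩ => ⟨a.symm, Ne.symm b⟩, fun ⟨a, b⟩ => ⟨a.symm, Ne.symm b⟩⟩ rfl rfl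
    · have h' : ¬ (c j = c i ∧ j ≠ i) := fun ⟨h1, _⟩ => h h1.symm
      simp [h, h']
  have hdiag : ∀ i, g i i = 0 := by intro i; simp [hg]
  rw [Finset.sum_congr rfl (fun p _ => hcv p), pair_sum_eq n g hsymm hdiag]
  have hrow : ∀ i : Fin n, ∑ j : Fin n, g i j
      = 1 - 1 / ((univ.filter fun x => c x = c i).card : ℝ) := by
    intro i
    have hmem : i ∈ univ.filter fun x => c x = c i := by simp
    have hcard : 0 < (univ.filter fun x => c x = c i).card := Finset.card_pos.2 ⟨i, hmem⟩
    have h1 : ∑ j : Fin n, g i j =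
        ∑ j ∈ (univ.filter fun x => c x = c i).erase i, g i j := by
      refine (Finset.sum_subset (Finset.subset_univ _) ?_).symm
      intro j _ hj
      simp only [Finset.mem_erase, Finset.mem_filter, Finset.mem_univ, true_and, not_and] at hj
      simp only [hg]
      rw [if_neg]
      rintro ⟨ha, hb⟩
      by_cases hji : j = i
      · exact hb (by rw [hji])
      · exact hj hji ha.symm
    have h2 : ∑ j ∈ (univ.filter fun x => c x = c i).erase i, g i j =
        ((univ.filter fun x => c x = c i).erase i).card •
          (1 / ((univ.filter fun x => c x = c i).card : ℝ)) := by
      rw [Finset.sum_congr rfl, Finset.sum_const]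
      intro j hj
      simp only [Finset.mem_erase, Finset.mem_filter] at hj
      simp [hg, hj.2.2.symm, Ne.symm hj.1]
    rw [h1, h2, Finset.card_erase_of_mem hmem]
    have hc0 : ((univ.filter fun x => c x = c i).card : ℝ) ≠ 0 := by positivity
    rw [nsmul_eq_mul, Nat.cast_sub (by omega)]
    field_simp
    rw [Nat.cast_one]
  rw [Finset.sum_congr rfl (fun i _ => hrow i)]
  have hK : ∑ i : Fin n, 1 / ((univ.filter fun x => c x = c i).card : ℝ) = K := by
    have hfib := Fintype.sum_fiberwise c (fun i => 1 / ((univ.filter fun x => c x = c i).card : ℝ))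
    rw [← hfib]
    have : ∀ v : Fin K, ∑ i : {i // c i = v}, 1 / ((univ.filter fun x => c x = c i).card : ℝ) = 1 := by
      intro v
      have hcongr : ∀ i : {i // c i = v}, (1 : ℝ) / ((univ.filter fun x => c x = c (i:Fin n)).card : ℝ)
          = 1 / ((univ.filter fun x => c x = v).card : ℝ) := by
        intro i; rw [i.2]
      rw [Finset.sum_congr rfl (fun i _ => hcongr i), Finset.sum_const]
      obtain ⟨w, hw⟩ := hc v
      have hpos : 0 < (univ.filter fun x => c x = v).card :=
        Finset.card_pos.2 ⟨w, by simp [hw]⟩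
      rw [Finset.card_univ, Fintype.card_subtype, nsmul_eq_mul]
      field_simp
    rw [Finset.sum_congr rfl (fun v _ => this v), Finset.sum_const, Finset.card_univ,
      Fintype.card_fin, nsmul_eq_mul, mul_one]
  rw [Finset.sum_sub_distrib, hK, Finset.sum_const, Finset.card_univ, Fintype.card_fin,
    nsmul_eq_mul, mul_one]

noncomputable def Bvec (n : ℕ) (i j : Fin n) : CutSpace n := fun p =>
  if (p.1.1 = i ∧ p.1.2 = j) ∨ (p.1.1 = j ∧ p.1.2 = i) then 1 else 0

def Gset (n K : ℕ) : Set (CutSpace n) :=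
  {X | ∃ c : Fin n → Fin K, Function.Surjective c ∧ X = cutVec n K c}

lemma cutVec_ind (n K : ℕ) (f0 f1 : Fin K) (hne : f0 ≠ f1) (S : Finset (Fin n))
    (p : PairIdx n) :
    cutVec n K (fun x => if x ∈ S then f0 else f1) p =
      if p.1.1 ∈ S ∧ p.1.2 ∈ S then 1 / (S.card : ℝ)
      else if p.1.1 ∉ S ∧ p.1.2 ∉ S then 1 / ((n : ℝ) - S.card) else 0 := by
  have hfib0 : (univ.filter fun x => (if x ∈ S then f0 else f1) = f0) = S := by
    ext x; by_cases hx : x ∈ S <;> simp [hx, hne, hne.symm]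
  have hfib1 : (univ.filter fun x => (if x ∈ S then f0 else f1) = f1) = Sᶜ := by
    ext x; by_cases hx : x ∈ S <;> simp [hx, hne, hne.symm]
  have hfib2 : (univ.filter fun x => x ∉ S) = Sᶜ := by ext x; simp
  have hcompl : ((Sᶜ : Finset (Fin n)).card : ℝ) = (n : ℝ) - S.card := by
    rw [Finset.card_compl, Nat.cast_sub (Finset.card_le_univ S)]
    simp
  by_cases h1 : p.1.1 ∈ S <;> by_cases h2 : p.1.2 ∈ S <;>
    simp only [cutVec, h1, h2, if_true, if_false, and_self, and_true, true_and, not_true,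
      not_false_iff, and_false, false_and] <;>
    simp [h1, h2, hne, hne.symm, hfib0, hfib1, hfib2, hcompl]

set_option maxHeartbeats 1000000 in
lemma keyB (n : ℕ) (K : ℕ) (hn : 3 ≤ n) (hK : K = 2) (i j k : Fin n)
    (hij : i ≠ j) (hik : i ≠ k) (hjk : j ≠ k) :
    Bvec n i j - Bvec n i k ∈ vectorSpan ℝ (Gset n K) := by
  subst hK
  set f0 : Fin 2 := 0 with hf0
  set f1 : Fin 2 := 1 with hf1
  have hne : f0 ≠ f1 := by decide
  have hsurj : ∀ S : Finset (Fin n), ∀ a b : Fin n, a ∈ S → b ∉ S →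
      Function.Surjective (fun x => if x ∈ S then f0 else f1) := by
    intro S a b ha hb v
    fin_cases v
    · exact ⟨a, by simp [ha, hf0]⟩
    · exact ⟨b, by simp [hb, hf1]⟩
  have hmem : ∀ S : Finset (Fin n), ∀ a b : Fin n, a ∈ S → b ∉ S →
      cutVec n 2 (fun x => if x ∈ S then f0 else f1) ∈ Gset n 2 :=
    fun S a b ha hb => ⟨_, hsurj S a b ha hb, rfl⟩
  have h0 : cutVec n 2 (fun x => if x ∈ ({j} : Finset (Fin n)) then f0 else f1) ∈ Gset n 2 :=
    hmem _ j i (by simp) (by simp [hij])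
  have h0' : cutVec n 2 (fun x => if x ∈ ({k} : Finset (Fin n)) then f0 else f1) ∈ Gset n 2 :=
    hmem _ k i (by simp) (by simp [hik])
  have h1 : cutVec n 2 (fun x => if x ∈ ({i, j} : Finset (Fin n)) then f0 else f1) ∈ Gset n 2 :=
    hmem _ i k (by simp) (by simp [hik.symm, hjk.symm])
  have h1' : cutVec n 2 (fun x => if x ∈ ({i, k} : Finset (Fin n)) then f0 else f1) ∈ Gset n 2 :=
    hmem _ i j (by simp) (by simp [hij.symm, hjk])
  have d0 := vsub_mem_vectorSpan ℝ h0 h0'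
  have d1 := vsub_mem_vectorSpan ℝ h1 h1'
  have hnR : (3:ℝ) ≤ (n:ℝ) := by exact_mod_cast hn
  have hn0 : (n:ℝ) ≠ 0 := by linarith
  have hn1 : (n:ℝ) - 1 ≠ 0 := by linarith
  have hn2 : (n:ℝ) - 2 ≠ 0 := by linarith
  -- cards
  have hcard1 : (({j} : Finset (Fin n)).card : ℝ) = 1 := by simp
  have hcard1' : (({k} : Finset (Fin n)).card : ℝ) = 1 := by simp
  have hcard2 : (({i, j} : Finset (Fin n)).card : ℝ) = 2 := by
    rw [Finset.card_insert_of_notMem (by simp [hij]), Finset.card_singleton]; norm_num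
  have hcard2' : (({i, k} : Finset (Fin n)).card : ℝ) = 2 := by
    rw [Finset.card_insert_of_notMem (by simp [hik]), Finset.card_singleton]; norm_num
  -- the identity
  have hidentity : Bvec n i j - Bvec n i k =
      (2 * ((n:ℝ) - 2) / n) •
        (cutVec n 2 (fun x => if x ∈ ({i, j} : Finset (Fin n)) then f0 else f1) -ᵥ
         cutVec n 2 (fun x => if x ∈ ({i, k} : Finset (Fin n)) then f0 else f1)) +
      (-(2 * ((n:ℝ) - 1) / n)) •
        (cutVec n 2 (fun x => if x ∈ ({j} : Finset (Fin n)) then f0 else f1) -ᵥ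
         cutVec n 2 (fun x => if x ∈ ({k} : Finset (Fin n)) then f0 else f1)) := by
    funext p
    have huv : p.1.1 ≠ p.1.2 := Fin.ne_of_lt p.2
    set u := p.1.1 with hu
    set v := p.1.2 with hv
    simp only [Bvec, vsub_eq_sub, Pi.add_apply, Pi.sub_apply, Pi.smul_apply, smul_eq_mul,
      cutVec_ind n 2 f0 f1 hne ({i,j} : Finset (Fin n)) p,
      cutVec_ind n 2 f0 f1 hne ({i,k} : Finset (Fin n)) p,
      cutVec_ind n 2 f0 f1 hne ({j} : Finset (Fin n)) p,
      cutVec_ind n 2 f0 f1 hne ({k} : Finset (Fin n)) p, ← hu, ← hv]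
    simp only [Finset.mem_insert, Finset.mem_singleton, hcard1, hcard1', hcard2, hcard2']
    by_cases hui : u = i <;> by_cases huj : u = j <;> by_cases huk : u = k <;>
    by_cases hvi : v = i <;> by_cases hvj : v = j <;> by_cases hvk : v = k <;>
      simp_all <;> field_simp <;> ring
  rw [hidentity]
  exact Submodule.add_mem _ (Submodule.smul_mem _ _ d1) (Submodule.smul_mem _ _ d0)

set_option maxHeartbeats 2000000 in
lemma keyA (n : ℕ) (K : ℕ) (hn : 3 ≤ n) (hK3 : 3 ≤ K) (hKn : K ≤ n - 1) (i j k : Fin n)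
    (hij : i ≠ j) (hik : i ≠ k) (hjk : j ≠ k) :
    Bvec n i j - Bvec n i k ∈ vectorSpan ℝ (Gset n K) := by
  have hn4 : 4 ≤ n := by omega
  -- an injection ι : Fin (K-2) → Fin n avoiding i, j, k
  have hcard3 : ({i, j, k} : Finset (Fin n)).card = 3 := by
    rw [Finset.card_insert_of_notMem (by simp [hij, hik]),
      Finset.card_insert_of_notMem (by simp [hjk]), Finset.card_singleton]
  obtain ⟨e⟩ : Nonempty (Fin (K - 2) ↪ {x : Fin n // x ∈ (univ \ {i, j, k} : Finset (Fin n))}) := by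
    apply Function.Embedding.nonempty_of_card_le
    rw [Fintype.card_fin, Fintype.card_coe, Finset.card_sdiff_of_subset (Finset.subset_univ _),
      Finset.card_univ, Fintype.card_fin, hcard3]
    omega
  set ι : Fin (K - 2) → Fin n := fun t => (e t : Fin n) with hι
  have hιinj : Function.Injective ι := fun a b hab => e.injective (Subtype.ext hab)
  have hιav : ∀ t, ι t ≠ i ∧ ι t ≠ j ∧ ι t ≠ k := by
    intro t
    have := (e t).2
    simp only [Finset.mem_sdiff, Finset.mem_univ, true_and, Finset.mem_insert,
      Finset.mem_singleton, not_or] at this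
    exact this
  have hK2pos : 0 < K - 2 := by omega
  set f0 : Fin K := ⟨0, by omega⟩ with hf0
  set f1 : Fin K := ⟨1, by omega⟩ with hf1
  have hne01 : f0 ≠ f1 := by simp [hf0, hf1, Fin.ext_iff]
  set m : Fin (K - 2) → Fin K := fun t => ⟨t.val + 2, by omega⟩ with hm
  have hm0 : ∀ t, m t ≠ f0 := by intro t; simp [hm, hf0, Fin.ext_iff]
  have hm1 : ∀ t, m t ≠ f1 := by intro t; simp [hm, hf1, Fin.ext_iff]
  have hminj : Function.Injective m := by
    intro a b hab; simp only [hm, Fin.mk.injEq] at hab; exact Fin.ext (by omega)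
  set ψ : Fin n → Fin (K - 2) := fun x =>
    if h : ∃ t, ι t = x then h.choose else ⟨0, hK2pos⟩ with hψ
  have hψι : ∀ t, ψ (ι t) = t := by
    intro t
    have h : ∃ s, ι s = ι t := ⟨t, rfl⟩
    simp only [hψ, dif_pos h]
    exact hιinj h.choose_spec
  set c : Fin n → Fin K := fun x => if x = i ∨ x = j then f0 else if x = k then f1 else m (ψ x)
    with hcdef
  set c' : Fin n → Fin K := fun x => if x = i ∨ x = k then f0 else if x = j then f1 else m (ψ x)
    with hc'def
  -- basic values
  have hci : c i = f0 := by simp [hcdef]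
  have hcj : c j = f0 := by simp [hcdef]
  have hck : c k = f1 := by simp [hcdef, hik.symm, hjk.symm]
  have hc'i : c' i = f0 := by simp [hc'def]
  have hc'k : c' k = f0 := by simp [hc'def]
  have hc'j : c' j = f1 := by simp [hc'def, hij.symm, hjk]
  have hout : ∀ x, x ≠ i → x ≠ j → x ≠ k → c x = m (ψ x) ∧ c' x = m (ψ x) := by
    intro x h1 h2 h3; constructor <;> simp [hcdef, hc'def, h1, h2, h3]
  -- surjectivity
  have hcs : Function.Surjective c := by
    intro v
    by_cases hv0 : v = f0
    · exact ⟨i, by rw [hci, hv0]⟩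
    by_cases hv1 : v = f1
    · exact ⟨k, by rw [hck, hv1]⟩
    · have hv2 : 2 ≤ v.val := by
        rcases Nat.lt_or_ge v.val 2 with h | h
        · interval_cases hv : v.val
          · exact absurd (Fin.ext hv) hv0
          · exact absurd (Fin.ext hv) hv1
        · exact h
      have hvK : v.val - 2 < K - 2 := by omega
      set t0 : Fin (K - 2) := ⟨v.val - 2, hvK⟩ with ht0
      obtain ⟨h1, h2, h3⟩ := hιav t0
      refine ⟨ι t0, ?_⟩
      rw [(hout _ h1 h2 h3).1, hψι]
      simp only [hm]
      exact Fin.ext (by simp [ht0]; omega)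
  have hc's : Function.Surjective c' := by
    intro v
    by_cases hv0 : v = f0
    · exact ⟨i, by rw [hc'i, hv0]⟩
    by_cases hv1 : v = f1
    · exact ⟨j, by rw [hc'j, hv1]⟩
    · have hv2 : 2 ≤ v.val := by
        rcases Nat.lt_or_ge v.val 2 with h | h
        · interval_cases hv : v.val
          · exact absurd (Fin.ext hv) hv0
          · exact absurd (Fin.ext hv) hv1
        · exact h
      have hvK : v.val - 2 < K - 2 := by omega
      set t0 : Fin (K - 2) := ⟨v.val - 2, hvK⟩ with ht0
      obtain ⟨h1, h2, h3⟩ := hιav t0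
      refine ⟨ι t0, ?_⟩
      rw [(hout _ h1 h2 h3).2, hψι]
      simp only [hm]
      exact Fin.ext (by simp [ht0]; omega)
  -- fibers over f0
  have hfib : (univ.filter fun x => c x = f0) = {i, j} := by
    ext x
    simp only [Finset.mem_filter, Finset.mem_univ, true_and, Finset.mem_insert,
      Finset.mem_singleton]
    constructor
    · intro hx
      by_contra hcon
      push_neg at hcon
      by_cases hxk : x = k
      · rw [hxk, hck] at hx; exact hne01 hx.symm
      · rw [(hout x hcon.1 hcon.2 hxk).1] at hx; exact hm0 _ hx
    · rintro (rfl | rfl) <;> simp [hci, hcj]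
  have hfib' : (univ.filter fun x => c' x = f0) = {i, k} := by
    ext x
    simp only [Finset.mem_filter, Finset.mem_univ, true_and, Finset.mem_insert,
      Finset.mem_singleton]
    constructor
    · intro hx
      by_contra hcon
      push_neg at hcon
      by_cases hxj : x = j
      · rw [hxj, hc'j] at hx; exact hne01 hx.symm
      · rw [(hout x hcon.1 hxj hcon.2).2] at hx; exact hm0 _ hx
    · rintro (rfl | rfl) <;> simp [hc'i, hc'k]
  have hcard2 : (({i, j} : Finset (Fin n)).card : ℝ) = 2 := by
    rw [Finset.card_insert_of_notMem (by simp [hij]), Finset.card_singleton]; norm_num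
  have hcard2' : (({i, k} : Finset (Fin n)).card : ℝ) = 2 := by
    rw [Finset.card_insert_of_notMem (by simp [hik]), Finset.card_singleton]; norm_num
  -- fibers over other values agree
  have hfibm : ∀ w : Fin K, w ≠ f0 → w ≠ f1 →
      (univ.filter fun x => c x = w) = (univ.filter fun x => c' x = w) := by
    intro w hw0 hw1
    ext x
    simp only [Finset.mem_filter, Finset.mem_univ, true_and]
    by_cases hxi : x = i
    · rw [hxi, hci, hc'i]
    by_cases hxj : x = j
    · rw [hxj, hcj, hc'j]
      constructor <;> (intro h; exact absurd h.symm (by assumption))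
    by_cases hxk : x = k
    · rw [hxk, hck, hc'k]
      constructor <;> (intro h; exact absurd h.symm (by assumption))
    · rw [(hout x hxi hxj hxk).1, (hout x hxi hxj hxk).2]
  have hm0' : ∀ t, f0 ≠ m t := fun t => (hm0 t).symm
  have hm1' : ∀ t, f1 ≠ m t := fun t => (hm1 t).symm
  have hidentity : Bvec n i j - Bvec n i k = (2:ℝ) • (cutVec n K c -ᵥ cutVec n K c') := by
    funext p
    obtain ⟨⟨u, v⟩, hlt⟩ := p
    have huv : u ≠ v := Fin.ne_of_lt hlt
    have hu4 : u = i ∨ u = j ∨ u = k ∨ (u ≠ i ∧ u ≠ j ∧ u ≠ k) := by tauto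
    have hv4 : v = i ∨ v = j ∨ v = k ∨ (v ≠ i ∧ v ≠ j ∧ v ≠ k) := by tauto
    simp only [Bvec, vsub_eq_sub, Pi.sub_apply, Pi.smul_apply, smul_eq_mul, cutVec]
    rcases hu4 with rfl | rfl | rfl | ⟨hu1, hu2, hu3⟩ <;>
      rcases hv4 with rfl | rfl | rfl | ⟨hv1, hv2, hv3⟩
    -- u = i
    · exact absurd rfl huv
    · simp [hci, hcj, hck, hc'i, hc'j, hc'k, hfib, hfib', hcard2, hcard2',
        hne01, hne01.symm, hij, hik, hjk, hij.symm, hik.symm, hjk.symm]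
      try norm_num
    · simp [hci, hcj, hck, hc'i, hc'j, hc'k, hfib, hfib', hcard2, hcard2',
        hne01, hne01.symm, hij, hik, hjk, hij.symm, hik.symm, hjk.symm]
      try norm_num
    · simp [hci, hcj, hck, hc'i, hc'j, hc'k, (hout v hv1 hv2 hv3).1, (hout v hv1 hv2 hv3).2, hm0, hm1, hm0', hm1',
        hij.symm, hik.symm, hjk.symm, hv1, hv2, hv3, Ne.symm hv1, Ne.symm hv2, Ne.symm hv3]
    -- u = j
    · simp [hci, hcj, hck, hc'i, hc'j, hc'k, hfib, hfib', hcard2, hcard2',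
        hne01, hne01.symm, hij, hik, hjk, hij.symm, hik.symm, hjk.symm]
      try norm_num
    · exact absurd rfl huv
    · simp [hci, hcj, hck, hc'i, hc'j, hc'k, hfib, hfib', hcard2, hcard2',
        hne01, hne01.symm, hij, hik, hjk, hij.symm, hik.symm, hjk.symm]
    · simp [hci, hcj, hck, hc'i, hc'j, hc'k, (hout v hv1 hv2 hv3).1, (hout v hv1 hv2 hv3).2, hm0, hm1, hm0', hm1',
        hij, hik, hjk, hij.symm, hik.symm, hjk.symm, hv1, hv2, hv3,
        Ne.symm hv1, Ne.symm hv2, Ne.symm hv3]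
    -- u = k
    · simp [hci, hcj, hck, hc'i, hc'j, hc'k, hfib, hfib', hcard2, hcard2',
        hne01, hne01.symm, hij, hik, hjk, hij.symm, hik.symm, hjk.symm]
      try norm_num
    · simp [hci, hcj, hck, hc'i, hc'j, hc'k, hfib, hfib', hcard2, hcard2',
        hne01, hne01.symm, hij, hik, hjk, hij.symm, hik.symm, hjk.symm]
    · exact absurd rfl huv
    · simp [hci, hcj, hck, hc'i, hc'j, hc'k, (hout v hv1 hv2 hv3).1, (hout v hv1 hv2 hv3).2, hm0, hm1, hm0', hm1',
        hij, hik, hjk, hij.symm, hik.symm, hjk.symm, hv1, hv2, hv3,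
        Ne.symm hv1, Ne.symm hv2, Ne.symm hv3]
    -- u outside
    · simp [hci, hcj, hck, hc'i, hc'j, hc'k, (hout u hu1 hu2 hu3).1, (hout u hu1 hu2 hu3).2, hm0, hm1, hm0', hm1',
        hij, hik, hjk, hij.symm, hik.symm, hjk.symm, hu1, hu2, hu3,
        Ne.symm hu1, Ne.symm hu2, Ne.symm hu3]
    · simp [hci, hcj, hck, hc'i, hc'j, hc'k, (hout u hu1 hu2 hu3).1, (hout u hu1 hu2 hu3).2, hm0, hm1, hm0', hm1',
        hij, hik, hjk, hij.symm, hik.symm, hjk.symm, hu1, hu2, hu3,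
        Ne.symm hu1, Ne.symm hu2, Ne.symm hu3]
    · simp [hci, hcj, hck, hc'i, hc'j, hc'k, (hout u hu1 hu2 hu3).1, (hout u hu1 hu2 hu3).2, hm0, hm1, hm0', hm1',
        hij, hik, hjk, hij.symm, hik.symm, hjk.symm, hu1, hu2, hu3,
        Ne.symm hu1, Ne.symm hu2, Ne.symm hu3]
    · -- both outside
      have hcu := (hout u hu1 hu2 hu3).1
      have hc'u := (hout u hu1 hu2 hu3).2
      have hcv := (hout v hv1 hv2 hv3).1
      have hc'v := (hout v hv1 hv2 hv3).2
      have hB1 : ¬((u = i ∧ v = j) ∨ (u = j ∧ v = i)) := by tauto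
      have hB2 : ¬((u = i ∧ v = k) ∨ (u = k ∧ v = i)) := by tauto
      simp only [hB1, hB2, if_false, sub_zero, zero_sub, sub_self]
      by_cases heq : m (ψ u) = m (ψ v)
      · rw [if_pos (by rw [hcu, hcv, heq]), if_pos (by rw [hc'u, hc'v, heq]), hcu, hc'u,
          hfibm (m (ψ u)) (hm0 _) (hm1 _)]
        ring
      · rw [if_neg (by rw [hcu, hcv]; exact heq), if_neg (by rw [hc'u, hc'v]; exact heq)]
        ring
  rw [hidentity]
  exact Submodule.smul_mem _ _ (vsub_mem_vectorSpan ℝ (⟨c, hcs, rfl⟩ : cutVec n K c ∈ Gset n K)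
    (⟨c', hc's, rfl⟩ : cutVec n K c' ∈ Gset n K))

lemma key (n K : ℕ) (hn : 3 ≤ n) (hK2 : 2 ≤ K) (hKn : K ≤ n - 1) (i j k : Fin n)
    (hij : i ≠ j) (hik : i ≠ k) (hjk : j ≠ k) :
    Bvec n i j - Bvec n i k ∈ vectorSpan ℝ (Gset n K) := by
  rcases Nat.lt_or_ge K 3 with h | h
  · exact keyB n K hn (by omega) i j k hij hik hjk
  · exact keyA n K hn h hKn i j k hij hik hjk

lemma Bvec_comm (n : ℕ) (i j : Fin n) : Bvec n i j = Bvec n j i := by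
  funext p; simp only [Bvec]; exact if_congr or_comm rfl rfl

lemma Bvec_single (n : ℕ) (q p : PairIdx n) :
    Bvec n q.1.1 q.1.2 p = if p = q then 1 else 0 := by
  simp only [Bvec]
  by_cases h : p = q
  · subst h; simp
  · rw [if_neg, if_neg h]
    rintro (⟨h1, h2⟩ | ⟨h1, h2⟩)
    · exact h (Subtype.ext (Prod.ext h1 h2))
    · have hp := p.2
      have hq := q.2
      rw [h1, h2] at hp
      exact (lt_asymm hp) hq

lemma single_diff_mem (n K : ℕ) (hn : 3 ≤ n) (hK2 : 2 ≤ K) (hKn : K ≤ n - 1)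
    (p q : PairIdx n) :
    Bvec n p.1.1 p.1.2 - Bvec n q.1.1 q.1.2 ∈ vectorSpan ℝ (Gset n K) := by
  by_cases hpq : p = q
  · rw [hpq, sub_self]; exact Submodule.zero_mem _
  set a := p.1.1 with ha
  set b := p.1.2 with hb
  set a' := q.1.1 with ha'
  set b' := q.1.2 with hb'
  have hab : a < b := p.2
  have hab' : a' < b' := q.2
  have hne : a ≠ b := Fin.ne_of_lt hab
  have hne' : a' ≠ b' := Fin.ne_of_lt hab'
  by_cases h1 : a = a'
  · have h2 : b ≠ b' := by
      intro h2
      exact hpq (Subtype.ext (Prod.ext h1 h2))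
    exact h1 ▸ key n K hn hK2 hKn a b b' hne (h1 ▸ hne') h2
  by_cases h2 : b = b'
  · rw [Bvec_comm n a b, Bvec_comm n a' b', ← h2]
    exact key n K hn hK2 hKn b a a' (Ne.symm hne) (h2 ▸ Ne.symm hne') h1
  by_cases h3 : a = b'
  · -- a' < b' = a < b
    have hka : a' ≠ a := Fin.ne_of_lt (h3 ▸ hab')
    have hkb : b ≠ a' := Ne.symm (Fin.ne_of_lt (lt_trans (h3 ▸ hab') hab))
    have : Bvec n a' b' = Bvec n a a' := by rw [← h3, Bvec_comm]
    rw [this]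
    exact key n K hn hK2 hKn a b a' hne (Ne.symm hka) hkb
  by_cases h4 : b = a'
  · have h5 : a ≠ b' := Fin.ne_of_lt (lt_trans hab (h4 ▸ hab'))
    have : Bvec n a b = Bvec n b a := Bvec_comm n a b
    rw [this, h4]
    exact key n K hn hK2 hKn a' a b' (h4 ▸ Ne.symm hne) hne' h5
  · have step1 : Bvec n a b - Bvec n a a' ∈ vectorSpan ℝ (Gset n K) :=
      key n K hn hK2 hKn a b a' hne h1 h4
    have step2 : Bvec n a a' - Bvec n a' b' ∈ vectorSpan ℝ (Gset n K) := by
      rw [Bvec_comm n a a']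
      exact key n K hn hK2 hKn a' a b' (Ne.symm h1) hne' h3
    have := Submodule.add_mem _ step1 step2
    rwa [sub_add_sub_cancel] at this

lemma sumzero_mem (n K : ℕ) (hn : 3 ≤ n) (hK2 : 2 ≤ K) (hKn : K ≤ n - 1)
    (Y : CutSpace n) (hY : ∑ p : PairIdx n, Y p = 0) :
    Y ∈ vectorSpan ℝ (Gset n K) := by
  have h01 : (0 : ℕ) < 1 := Nat.zero_lt_one
  set p0 : PairIdx n := ⟨(⟨0, by omega⟩, ⟨1, by omega⟩), by simp [Fin.lt_def]⟩ with hp0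
  have hrepr : Y = ∑ p : PairIdx n,
      Y p • (Bvec n p.1.1 p.1.2 - Bvec n p0.1.1 p0.1.2) := by
    funext q
    rw [Finset.sum_apply]
    have : ∀ p : PairIdx n, (Y p • (Bvec n p.1.1 p.1.2 - Bvec n p0.1.1 p0.1.2)) q
        = Y p * (if q = p then 1 else 0) - Y p * (if q = p0 then 1 else 0) := by
      intro p
      simp only [Pi.smul_apply, Pi.sub_apply, smul_eq_mul, Bvec_single n p q,
        Bvec_single n p0 q, mul_sub]
    rw [Finset.sum_congr rfl (fun p _ => this p), Finset.sum_sub_distrib]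
    have e1 : ∑ p : PairIdx n, Y p * (if q = p then 1 else 0) = Y q := by
      rw [Finset.sum_congr rfl (fun p _ => by rw [mul_ite, mul_one, mul_zero])]
      simp
    have e2 : ∑ p : PairIdx n, Y p * (if q = p0 then 1 else 0)
        = (∑ p : PairIdx n, Y p) * (if q = p0 then 1 else 0) := by
      rw [Finset.sum_mul]
    rw [e1, e2, hY, zero_mul, sub_zero]
  rw [hrepr]
  exact Submodule.sum_mem _ fun p _ =>
    Submodule.smul_mem _ _ (single_diff_mem n K hn hK2 hKn p p0)

lemma card_pairIdx (n : ℕ) : Fintype.card (PairIdx n) = n * (n - 1) / 2 := by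
  rw [Fintype.card_subtype]
  have h1 : (Finset.univ.filter fun p : Fin n × Fin n => p.1 < p.2).card = ∑ j : Fin n, (j : ℕ) := by
    rw [Finset.card_filter, Fintype.sum_prod_type_right]
    congr 1; ext j
    rw [← Finset.card_filter]
    have := Fin.card_Iio j
    rwa [show Finset.Iio j = Finset.univ.filter (fun i => i < j) from by ext x; simp] at this
  rw [h1, Fin.sum_univ_eq_sum_range (fun i => i)]
  have := Finset.sum_range_id_mul_two n
  omega

/-- for n ≥ 3 and 2 ≤ K ≤ n−1, the affine hull of RCut^{=K}_n is the
hyperplane {X : ∑_{i<j} X_{ij} = (n−K)/2}; in particular its dimension is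
n(n−1)/2 − 1. -/
theorem stmt2 (n K : ℕ) (hn : 3 ≤ n) (hK2 : 2 ≤ K) (hKn : K ≤ n - 1) :
    (affineSpan ℝ (RCutEq n K) : Set (CutSpace n)) =
      {X : CutSpace n | ∑ p : PairIdx n, X p = ((n : ℝ) - K) / 2} ∧
    Module.finrank ℝ (affineSpan ℝ (RCutEq n K)).direction = n * (n - 1) / 2 - 1 := by
  classical
  have hKn2 : K ≤ n := by omega
  set r : ℝ := ((n : ℝ) - K) / 2 with hr
  set L : CutSpace n →ₗ[ℝ] ℝ :=
    { toFun := fun X => ∑ p : PairIdx n, X p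
      map_add' := fun X Y => by simp [Finset.sum_add_distrib]
      map_smul' := fun c X => by simp [Finset.mul_sum] } with hL
  set H : AffineSubspace ℝ (CutSpace n) :=
    { carrier := {X : CutSpace n | ∑ p : PairIdx n, X p = r}
      smul_vsub_vadd_mem' := by
        intro t p1 p2 p3 h1 h2 h3
        simp only [Set.mem_setOf_eq] at h1 h2 h3 ⊢
        have hptw : ∀ p : PairIdx n, (t • (p1 -ᵥ p2) +ᵥ p3) p = t * (p1 p - p2 p) + p3 p :=
          fun p => rfl
        rw [Finset.sum_congr rfl (fun p _ => hptw p), Finset.sum_add_distrib, ← Finset.mul_sum,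
          Finset.sum_sub_distrib, h1, h2, h3]
        ring } with hH
  obtain ⟨c₀, hc₀s⟩ : ∃ c : Fin n → Fin K, Function.Surjective c := by
    refine ⟨fun x => ⟨min x.val (K - 1), by omega⟩, fun v => ?_⟩
    refine ⟨⟨v.val, by have := v.isLt; omega⟩, ?_⟩
    exact Fin.ext (by simp only []; have := v.isLt; simp; omega)
  have hX0G : cutVec n K c₀ ∈ Gset n K := ⟨c₀, hc₀s, rfl⟩
  have hGR : RCutEq n K = convexHull ℝ (Gset n K) := rfl
  have hGsub : Gset n K ⊆ (H : Set (CutSpace n)) := by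
    rintro X ⟨c, hcs, rfl⟩
    exact cutVec_sum n K c hcs
  have hle : affineSpan ℝ (RCutEq n K) ≤ H := by
    rw [affineSpan_le, hGR]
    exact convexHull_min hGsub H.convex
  have hX0R : cutVec n K c₀ ∈ RCutEq n K := by
    rw [hGR]; exact subset_convexHull ℝ _ hX0G
  have hX0H : ∑ p : PairIdx n, cutVec n K c₀ p = r := cutVec_sum n K c₀ hc₀s
  have hge : (H : Set (CutSpace n)) ⊆ (affineSpan ℝ (RCutEq n K) : Set (CutSpace n)) := by
    intro X hX
    have hX' : ∑ p : PairIdx n, X p = r := hX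
    have hY : ∑ p : PairIdx n, (X - cutVec n K c₀) p = 0 := by
      have : ∀ p : PairIdx n, (X - cutVec n K c₀) p = X p - cutVec n K c₀ p := fun p => rfl
      rw [Finset.sum_congr rfl (fun p _ => this p), Finset.sum_sub_distrib, hX', hX0H, sub_self]
    have hmem : X - cutVec n K c₀ ∈ vectorSpan ℝ (Gset n K) :=
      sumzero_mem n K hn hK2 hKn _ hY
    have hdir : X - cutVec n K c₀ ∈ (affineSpan ℝ (RCutEq n K)).direction := by
      rw [direction_affineSpan]
      exact vectorSpan_mono ℝ (hGR ▸ subset_convexHull ℝ (Gset n K)) hmem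
    have hfin : (X - cutVec n K c₀) +ᵥ cutVec n K c₀ ∈ affineSpan ℝ (RCutEq n K) :=
      AffineSubspace.vadd_mem_of_mem_direction hdir (mem_affineSpan ℝ hX0R)
    simpa using hfin
  have haff : affineSpan ℝ (RCutEq n K) = H := le_antisymm hle (fun x hx => hge hx)
  constructor
  · rw [haff]; rfl
  · rw [haff]
    have hdirH : H.direction = LinearMap.ker L := by
      ext v
      rw [AffineSubspace.mem_direction_iff_eq_vsub ⟨cutVec n K c₀, hX0H⟩]
      constructor
      · rintro ⟨q1, hq1, q2, hq2, rfl⟩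
        have hq1' : ∑ p : PairIdx n, q1 p = r := hq1
        have hq2' : ∑ p : PairIdx n, q2 p = r := hq2
        have : L (q1 -ᵥ q2) = ∑ p : PairIdx n, (q1 p - q2 p) := rfl
        rw [LinearMap.mem_ker, this, Finset.sum_sub_distrib, hq1', hq2', sub_self]
      · intro hv
        have hv' : ∑ p : PairIdx n, v p = 0 := hv
        refine ⟨v +ᵥ cutVec n K c₀, ?_, cutVec n K c₀, hX0H, by simp⟩
        show ∑ p : PairIdx n, (v +ᵥ cutVec n K c₀) p = r
        have : ∀ p : PairIdx n, (v +ᵥ cutVec n K c₀) p = v p + cutVec n K c₀ p := fun p => rfl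
        rw [Finset.sum_congr rfl (fun p _ => this p), Finset.sum_add_distrib, hv', hX0H, zero_add]
    rw [hdirH]
    have hp0lt : ((⟨0, by omega⟩ : Fin n), (⟨1, by omega⟩ : Fin n)).1 <
        ((⟨0, by omega⟩ : Fin n), (⟨1, by omega⟩ : Fin n)).2 := by simp [Fin.lt_def]
    have hsurjL : Function.Surjective L := by
      intro t
      refine ⟨fun p => if p = ⟨_, hp0lt⟩ then t else 0, ?_⟩
      show (∑ p : PairIdx n, if p = ⟨_, hp0lt⟩ then t else 0) = t
      rw [Finset.sum_ite_eq' Finset.univ]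
      simp
    have hrange : LinearMap.range L = ⊤ := LinearMap.range_eq_top.mpr hsurjL
    have hrn := LinearMap.finrank_range_add_finrank_ker L
    rw [hrange, finrank_top, Module.finrank_self] at hrn
    have hpi : Module.finrank ℝ (CutSpace n) = Fintype.card (PairIdx n) := Module.finrank_pi ℝ
    rw [hpi, card_pairIdx] at hrn
    have h6 : 3 * 2 ≤ n * (n - 1) := Nat.mul_le_mul (by omega) (by omega)
    have hfin : Module.finrank ℝ (LinearMap.ker L) = n * (n - 1) / 2 - 1 := by omega
    exact hfin
end

section
/- For all integers n ≥ 3 and 2 ≤ K ≤ n: every ratio-cut vector of a partition of [n] into at most K nonempty clusters is an extreme point of RMet^K_n, and every ratio-cut vector of a partition of [n] into exactly K nonempty clusters is an extreme point of RMet^{=K}_n. -/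
lemma ent_eq {n : ℕ} (W : CutSpace n) {i j : Fin n} (h : i < j) : ent W i j = W ⟨(i,j), h⟩ := by
  simp [ent, h]

lemma ent_symm {n : ℕ} (W : CutSpace n) (i j : Fin n) : ent W i j = ent W j i := by
  unfold ent
  rcases lt_trichotomy i j with h | h | h
  · simp [h, not_lt.2 h.le, h.not_gt]
  · simp [h]
  · simp [h, not_lt.2 h.le, h.not_gt]

lemma ent_self {n : ℕ} (W : CutSpace n) (i : Fin n) : ent W i i = 0 := by
  simp [ent]

lemma ent_comb {n : ℕ} (Y Z : CutSpace n) (a b : ℝ) (i j : Fin n) :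
    ent (a • Y + b • Z) i j = a * ent Y i j + b * ent Z i j := by
  unfold ent
  split_ifs <;> simp [Pi.add_apply, Pi.smul_apply, smul_eq_mul]

lemma pair_sum {n : ℕ} (f : Fin n → Fin n → ℝ) (hsym : ∀ i j, f i j = f j i)
    (hdiag : ∀ i, f i i = 0) :
    ∑ p : PairIdx n, f p.1.1 p.1.2 = (1/2) * ∑ i, ∑ j, f i j := by
  classical
  have h1 : ∑ i, ∑ j, f i j = ∑ p : Fin n × Fin n, f p.1 p.2 := by
    rw [← Finset.sum_product']
    rfl
  have h2 : ∑ p : Fin n × Fin n, f p.1 p.2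
      = ∑ p ∈ Finset.univ.filter (fun p : Fin n × Fin n => p.1 < p.2), f p.1 p.2
      + ∑ p ∈ Finset.univ.filter (fun p : Fin n × Fin n => ¬ p.1 < p.2), f p.1 p.2 :=
    (Finset.sum_filter_add_sum_filter_not _ _ _).symm
  have h3 : ∑ p ∈ Finset.univ.filter (fun p : Fin n × Fin n => ¬ p.1 < p.2), f p.1 p.2
      = ∑ p ∈ Finset.univ.filter (fun p : Fin n × Fin n => p.2 < p.1), f p.1 p.2 := by
    refine (Finset.sum_subset ?_ ?_).symm
    · intro p hp
      simp only [Finset.mem_filter, Finset.mem_univ, true_and] at hp ⊢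
      exact not_lt.2 hp.le
    · intro p hp hq
      simp only [Finset.mem_filter, Finset.mem_univ, true_and] at hp hq
      have : p.1 = p.2 := le_antisymm (not_lt.1 hq) (not_lt.1 hp)
      rw [show p.1 = p.2 from this, hdiag]
  have h4 : ∑ p ∈ Finset.univ.filter (fun p : Fin n × Fin n => p.2 < p.1), f p.1 p.2
      = ∑ p ∈ Finset.univ.filter (fun p : Fin n × Fin n => p.1 < p.2), f p.1 p.2 := by
    refine Finset.sum_nbij' (fun p => Prod.swap p) (fun p => Prod.swap p) ?_ ?_ ?_ ?_ ?_ <;>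
      intros <;> simp_all <;> exact hsym _ _
  have h5 : ∑ p : PairIdx n, f p.1.1 p.1.2
      = ∑ p ∈ Finset.univ.filter (fun p : Fin n × Fin n => p.1 < p.2), f p.1 p.2 :=
    (Finset.sum_subtype (p := fun q : Fin n × Fin n => q.1 < q.2)
      (Finset.univ.filter (fun p : Fin n × Fin n => p.1 < p.2))
      (by intro x; simp) (fun q => f q.1 q.2)).symm
  rw [h5, h1, h2, h3, h4]; ring

section cvec
variable {n K : ℕ} (c : Fin n → Fin K)

/-- fiber of the cluster of `i` -/
noncomputable def fib (i : Fin n) : Finset (Fin n) := Finset.univ.filter fun x => c x = c i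

lemma mem_fib {i j : Fin n} : j ∈ fib c i ↔ c j = c i := by simp [fib]

lemma self_mem_fib (i : Fin n) : i ∈ fib c i := by simp [fib]

lemma fib_eq {i j : Fin n} (h : c i = c j) : fib c i = fib c j := by
  unfold fib; rw [h]

lemma fib_card_pos (i : Fin n) : 0 < (fib c i).card :=
  Finset.card_pos.2 ⟨i, self_mem_fib c i⟩

lemma entCut {i j : Fin n} (hij : i ≠ j) :
    ent (cutVec n K c) i j = if c i = c j then 1 / ((fib c i).card : ℝ) else 0 := by
  unfold ent
  rcases lt_trichotomy i j with h | h | h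
  · rw [dif_pos h]
    show (if c i = c j then 1 / ((Finset.univ.filter fun x => c x = c i).card : ℝ) else 0) = _
    rfl
  · exact absurd h hij
  · rw [dif_neg (asymm h), dif_pos h]
    show (if c j = c i then 1 / ((Finset.univ.filter fun x => c x = c j).card : ℝ) else 0) = _
    by_cases hc : c i = c j
    · rw [if_pos hc.symm, if_pos hc]
      have h2 : fib c i = fib c j := fib_eq c hc
      rw [show (Finset.univ.filter fun x => c x = c j) = fib c j from rfl, ← h2]
    · rw [if_neg fun hh => hc hh.symm, if_neg hc]

lemma cutVec_apply {i j : Fin n} (h : i < j) :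
    cutVec n K c ⟨(i,j), h⟩ = if c i = c j then 1 / ((fib c i).card : ℝ) else 0 := by
  rw [show cutVec n K c ⟨(i,j),h⟩ = ent (cutVec n K c) i j from (ent_eq _ h).symm,
    entCut c h.ne]

lemma cutVec_nonneg (p : PairIdx n) : 0 ≤ cutVec n K c p := by
  unfold cutVec
  split_ifs
  · positivity
  · exact le_refl 0

lemma sum_ent_cut (l : Fin n) (S : Finset (Fin n)) (hl : l ∉ S) :
    ∑ j ∈ S, ent (cutVec n K c) l j
      = ((S.filter fun j => c j = c l).card : ℝ) / ((fib c l).card : ℝ) := by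
  have h1 : ∀ j ∈ S, ent (cutVec n K c) l j
      = if c j = c l then 1 / ((fib c l).card : ℝ) else 0 := by
    intro j hj
    have hlj : l ≠ j := by rintro rfl; exact hl hj
    rw [entCut c hlj]
    by_cases hc : c l = c j
    · rw [if_pos hc, if_pos hc.symm]
    · rw [if_neg hc, if_neg (fun h => hc h.symm)]
  rw [Finset.sum_congr rfl h1, ← Finset.sum_filter]
  simp only [Finset.sum_const, nsmul_eq_mul]
  ring

lemma sum_cutVec :
    ∑ p : PairIdx n, cutVec n K c p
      = ((n : ℝ) - ∑ i : Fin n, 1 / ((fib c i).card : ℝ)) / 2 := by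
  have h0 : ∀ p : PairIdx n, cutVec n K c p = ent (cutVec n K c) p.1.1 p.1.2 := fun p =>
    (ent_eq _ p.2).symm
  rw [Finset.sum_congr rfl (fun p _ => h0 p),
    pair_sum _ (fun i j => ent_symm _ i j) (fun i => ent_self _ i)]
  have h1 : ∀ i : Fin n, ∑ j, ent (cutVec n K c) i j
      = 1 - 1 / ((fib c i).card : ℝ) := by
    intro i
    have h2 : ∑ j, ent (cutVec n K c) i j
        = ent (cutVec n K c) i i + ∑ j ∈ Finset.univ.erase i, ent (cutVec n K c) i j :=
      (Finset.add_sum_erase _ _ (Finset.mem_univ i)).symm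
    rw [h2, ent_self, zero_add, sum_ent_cut c i _ (Finset.notMem_erase i _)]
    have h3 : (Finset.univ.erase i).filter (fun j => c j = c i) = (fib c i).erase i := by
      ext x; simp [fib, and_comm]
    rw [h3, Finset.card_erase_of_mem (self_mem_fib c i)]
    have hpos : (0:ℝ) < ((fib c i).card : ℝ) := by
      exact_mod_cast fib_card_pos c i
    rw [Nat.cast_sub (fib_card_pos c i)]
    field_simp
    norm_num
  rw [Finset.sum_congr rfl (fun i _ => h1 i), Finset.sum_sub_distrib]
  simp [Finset.card_univ]
  ring

lemma sum_inv_fib_le : ∑ i : Fin n, 1 / ((fib c i).card : ℝ) ≤ K := by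
  have key : ∀ i ∈ Finset.univ, (fun i : Fin n => 1 / ((fib c i).card : ℝ)) i
      = (fun i => 1 / (((Finset.univ.filter fun x => c x = c i).card : ℝ))) i := by
    intro i _; rfl
  rw [← Finset.sum_fiberwise Finset.univ c (fun i : Fin n => 1 / ((fib c i).card : ℝ))]
  have h1 : ∀ k : Fin K, ∑ i ∈ Finset.univ.filter (fun i => c i = k),
      1 / ((fib c i).card : ℝ) ≤ 1 := by
    intro k
    have h2 : ∀ i ∈ Finset.univ.filter (fun i => c i = k),
        1 / ((fib c i).card : ℝ)
          = 1 / (((Finset.univ.filter fun i => c i = k).card : ℝ)) := by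
      intro i hi
      simp only [Finset.mem_filter, Finset.mem_univ, true_and] at hi
      unfold fib
      rw [hi]
    rw [Finset.sum_congr rfl h2, Finset.sum_const, nsmul_eq_mul]
    rcases Nat.eq_zero_or_pos (Finset.univ.filter fun i => c i = k).card with h | h
    · simp [h]
    · have : (0:ℝ) < ((Finset.univ.filter fun i => c i = k).card : ℝ) := by exact_mod_cast h
      rw [mul_one_div, div_self this.ne']
  calc ∑ k : Fin K, ∑ i ∈ Finset.univ.filter (fun i => c i = k), 1 / ((fib c i).card : ℝ)
      ≤ ∑ _k : Fin K, (1:ℝ) := Finset.sum_le_sum (fun k _ => h1 k)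
    _ = K := by simp

lemma sum_inv_fib_eq (hc : Function.Surjective c) :
    ∑ i : Fin n, 1 / ((fib c i).card : ℝ) = K := by
  rw [← Finset.sum_fiberwise Finset.univ c (fun i : Fin n => 1 / ((fib c i).card : ℝ))]
  have h1 : ∀ k : Fin K, ∑ i ∈ Finset.univ.filter (fun i => c i = k),
      1 / ((fib c i).card : ℝ) = 1 := by
    intro k
    have h2 : ∀ i ∈ Finset.univ.filter (fun i => c i = k),
        1 / ((fib c i).card : ℝ)
          = 1 / (((Finset.univ.filter fun i => c i = k).card : ℝ)) := by
      intro i hi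
      simp only [Finset.mem_filter, Finset.mem_univ, true_and] at hi
      unfold fib
      rw [hi]
    rw [Finset.sum_congr rfl h2, Finset.sum_const, nsmul_eq_mul]
    obtain ⟨i, hi⟩ := hc k
    have h : 0 < (Finset.univ.filter fun i => c i = k).card :=
      Finset.card_pos.2 ⟨i, by simp [hi]⟩
    have : (0:ℝ) < ((Finset.univ.filter fun i => c i = k).card : ℝ) := by exact_mod_cast h
    rw [mul_one_div, div_self this.ne']
  rw [Finset.sum_congr rfl (fun k _ => h1 k)]
  simp

end cvec

section psum
variable {n : ℕ}

lemma pairSumOn_comb (Y Z : CutSpace n) (a b : ℝ) (T : Finset (Fin n)) :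
    pairSumOn (a • Y + b • Z) T = a * pairSumOn Y T + b * pairSumOn Z T := by
  unfold pairSumOn
  have h0 : ∀ p : PairIdx n, (if p.1.1 ∈ T ∧ p.1.2 ∈ T then (a • Y + b • Z) p else 0)
      = a * (if p.1.1 ∈ T ∧ p.1.2 ∈ T then Y p else 0)
        + b * (if p.1.1 ∈ T ∧ p.1.2 ∈ T then Z p else 0) := by
    intro p
    split_ifs
    · show a * Y p + b * Z p = _
      ring
    · simp
  rw [Finset.sum_congr rfl (fun p _ => h0 p), Finset.sum_add_distrib,
    ← Finset.mul_sum, ← Finset.mul_sum]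

lemma pairSumOn_pair (W : CutSpace n) {i j : Fin n} (h : i < j) :
    pairSumOn W {i, j} = W ⟨(i,j), h⟩ := by
  unfold pairSumOn
  rw [Finset.sum_eq_single (⟨(i,j), h⟩ : PairIdx n)]
  · rw [if_pos ⟨by simp, by simp⟩]
  · intro p _ hp
    rw [if_neg]
    obtain ⟨⟨x, y⟩, hlt⟩ := p
    rintro ⟨h1, h2⟩
    simp only [Finset.mem_insert, Finset.mem_singleton] at h1 h2
    apply hp
    rcases h1 with rfl | rfl <;> rcases h2 with rfl | rfl
    · exact absurd hlt (lt_irrefl _)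
    · rfl
    · exact absurd hlt (asymm h)
    · exact absurd hlt (lt_irrefl _)
  · intro hmem
    exact absurd (Finset.mem_univ _) hmem

lemma pairSumOn_pair_ent (W : CutSpace n) {i j : Fin n} (h : i ≠ j) :
    pairSumOn W {i, j} = ent W i j := by
  rcases lt_or_gt_of_ne h with hlt | hlt
  · rw [pairSumOn_pair W hlt, ent_eq W hlt]
  · rw [show ({i, j} : Finset (Fin n)) = {j, i} by ext x; simp [or_comm],
      pairSumOn_pair W hlt, ent_symm, ent_eq W hlt]

lemma pairSumOn_eq_double (W : CutSpace n) (T : Finset (Fin n)) :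
    pairSumOn W T = (1/2) * ∑ i ∈ T, ∑ j ∈ T, ent W i j := by
  unfold pairSumOn
  have h0 : ∀ p : PairIdx n, (if p.1.1 ∈ T ∧ p.1.2 ∈ T then W p else 0)
      = if p.1.1 ∈ T ∧ p.1.2 ∈ T then ent W p.1.1 p.1.2 else 0 := by
    intro p
    split_ifs with hc
    · exact (ent_eq W p.2).symm
    · rfl
  rw [Finset.sum_congr rfl (fun p _ => h0 p),
    pair_sum (fun i j => if i ∈ T ∧ j ∈ T then ent W i j else 0)
      (fun i j => by
        show (if i ∈ T ∧ j ∈ T then ent W i j else 0)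
          = if j ∈ T ∧ i ∈ T then ent W j i else 0
        by_cases hc : i ∈ T ∧ j ∈ T
        · rw [if_pos hc, if_pos ⟨hc.2, hc.1⟩, ent_symm]
        · rw [if_neg hc, if_neg (fun hc2 => hc ⟨hc2.2, hc2.1⟩)])
      (fun i => by
        show (if i ∈ T ∧ i ∈ T then ent W i i else 0) = 0
        split_ifs <;> simp [ent_self])]
  congr 1
  have h1 : ∀ i : Fin n, (∑ j, if i ∈ T ∧ j ∈ T then ent W i j else 0)
      = if i ∈ T then ∑ j ∈ T, ent W i j else 0 := by
    intro i
    by_cases hi : i ∈ T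
    · rw [if_pos hi]
      simp only [hi, true_and]
      rw [Finset.sum_ite_mem, Finset.univ_inter]
    · simp [hi]
  rw [Finset.sum_congr rfl (fun i _ => h1 i), Finset.sum_ite_mem, Finset.univ_inter]

end psum

section ineq
variable {n K : ℕ} (c : Fin n → Fin K)

lemma compl_filter_eq (l : Fin n) (T : Finset (Fin n)) :
    ((Finset.univ \ insert l T).filter fun j => c j = c l) = fib c l \ insert l T := by
  ext x
  simp [fib, and_comm]

lemma fib_inter_insert (l : Fin n) (T : Finset (Fin n)) (hl : l ∉ T) :
    (fib c l ∩ insert l T).card = (T.filter fun j => c j = c l).card + 1 := by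
  have h1 : fib c l ∩ insert l T = insert l (T.filter fun j => c j = c l) := by
    ext x
    simp only [Finset.mem_inter, Finset.mem_insert, Finset.mem_filter, mem_fib]
    constructor
    · rintro ⟨hf, rfl | hT⟩
      · exact Or.inl rfl
      · exact Or.inr ⟨hT, hf⟩
    · rintro (rfl | ⟨hT, hf⟩)
      · exact ⟨rfl, Or.inl rfl⟩
      · exact ⟨hf, Or.inr hT⟩
  rw [h1, Finset.card_insert_of_notMem (fun h => hl (Finset.mem_filter.1 h).1), add_comm]

lemma compl_filter_card (l : Fin n) (T : Finset (Fin n)) (hl : l ∉ T) :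
    ((Finset.univ \ insert l T).filter fun j => c j = c l).card
      = (fib c l).card - ((T.filter fun j => c j = c l).card + 1) := by
  rw [compl_filter_eq]
  have h1 := Finset.card_sdiff_add_card_inter (fib c l) (insert l T)
  rw [fib_inter_insert c l T hl] at h1
  omega

lemma filter_card_succ_le (l : Fin n) (T : Finset (Fin n)) (hl : l ∉ T) :
    (T.filter fun j => c j = c l).card + 1 ≤ (fib c l).card := by
  have h1 := Finset.card_sdiff_add_card_inter (fib c l) (insert l T)
  rw [fib_inter_insert c l T hl] at h1
  omega

lemma pairSumOn_cut_lb (l : Fin n) (T : Finset (Fin n)) (hl : l ∉ T) :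
    ((T.filter fun j => c j = c l).card : ℝ)
      * (((T.filter fun j => c j = c l).card : ℝ) - 1) / (2 * ((fib c l).card : ℝ))
      ≤ pairSumOn (cutVec n K c) T := by
  classical
  set X := cutVec n K c with hX
  set T' := T.filter fun j => c j = c l with hT'
  set t := T'.card with ht
  set m := (fib c l).card with hm
  have hmpos : (0:ℝ) < (m:ℝ) := by exact_mod_cast fib_card_pos c l
  have step1 : pairSumOn X T' ≤ pairSumOn X T := by
    unfold pairSumOn
    apply Finset.sum_le_sum
    intro p _
    by_cases hc : p.1.1 ∈ T' ∧ p.1.2 ∈ T'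
    · rw [if_pos hc, if_pos ⟨Finset.mem_of_mem_filter _ hc.1, Finset.mem_of_mem_filter _ hc.2⟩]
    · rw [if_neg hc]
      split_ifs
      · exact cutVec_nonneg c p
      · exact le_refl 0
  have step2 : pairSumOn X T' = (t:ℝ) * ((t:ℝ) - 1) / (2 * (m:ℝ)) := by
    rw [pairSumOn_eq_double]
    have hinner : ∀ i ∈ T', ∑ j ∈ T', ent X i j = ((t:ℝ) - 1) / (m:ℝ) := by
      intro i hi
      have hci : c i = c l := (Finset.mem_filter.1 hi).2
      have h2 : ∑ j ∈ T', ent X i j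
          = ent X i i + ∑ j ∈ T'.erase i, ent X i j :=
        (Finset.add_sum_erase _ _ hi).symm
      rw [h2, ent_self, zero_add, sum_ent_cut c i _ (Finset.notMem_erase i _)]
      have h3 : (T'.erase i).filter (fun j => c j = c i) = T'.erase i := by
        apply Finset.filter_true_of_mem
        intro x hx
        have := (Finset.mem_filter.1 (Finset.mem_of_mem_erase hx)).2
        rw [this, hci]
      rw [h3, Finset.card_erase_of_mem hi, ← fib_eq c hci.symm]
      have htpos : 1 ≤ t := by
        rw [ht]
        exact Finset.card_pos.2 ⟨i, hi⟩
      rw [Nat.cast_sub htpos]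
      norm_num
      rw [← hm]
    rw [Finset.sum_congr rfl hinner, Finset.sum_const, nsmul_eq_mul]
    field_simp
    rw [← ht]
  rw [← step2]
  exact step1

lemma cut_lhs (l : Fin n) (T : Finset (Fin n)) (hl : l ∉ T) :
    2 * ∑ j ∈ T, ent (cutVec n K c) l j
      + ∑ j ∈ Finset.univ \ insert l T, ent (cutVec n K c) l j
      = (((T.filter fun j => c j = c l).card : ℝ) + ((fib c l).card : ℝ) - 1)
        / ((fib c l).card : ℝ) := by
  have hl2 : l ∉ Finset.univ \ insert l T := by simp
  rw [sum_ent_cut c l T hl, sum_ent_cut c l _ hl2, compl_filter_card c l T hl]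
  have h3 := filter_card_succ_le c l T hl
  have hmpos : (0:ℝ) < ((fib c l).card:ℝ) := by exact_mod_cast fib_card_pos c l
  rw [Nat.cast_sub h3]
  push_cast
  field_simp
  ring

lemma cut_ineq2 (l : Fin n) (T : Finset (Fin n)) (hl : l ∉ T) :
    2 * ∑ j ∈ T, ent (cutVec n K c) l j
      + ∑ j ∈ Finset.univ \ insert l T, ent (cutVec n K c) l j
      ≤ 1 + pairSumOn (cutVec n K c) T := by
  rw [cut_lhs c l T hl]
  have hb := pairSumOn_cut_lb c l T hl
  set t := (T.filter fun j => c j = c l).card with ht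
  set m := (fib c l).card with hm
  have hmpos : (0:ℝ) < (m:ℝ) := by exact_mod_cast fib_card_pos c l
  have hq : 0 ≤ ((t:ℝ) - 1) * ((t:ℝ) - 2) := by
    rcases Nat.lt_or_ge t 2 with h | h
    · interval_cases t <;> norm_num
    · have h2 : (2:ℝ) ≤ (t:ℝ) := by exact_mod_cast h
      nlinarith
  have hineq : ((t:ℝ) + (m:ℝ) - 1) / (m:ℝ)
      ≤ 1 + (t:ℝ) * ((t:ℝ) - 1) / (2 * (m:ℝ)) := by
    rw [show (1:ℝ) + (t:ℝ) * ((t:ℝ) - 1) / (2 * (m:ℝ))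
        = (2 * (m:ℝ) + (t:ℝ) * ((t:ℝ) - 1)) / (2 * (m:ℝ)) by field_simp,
      div_le_div_iff₀ hmpos (by positivity)]
    nlinarith [hq, hmpos]
  linarith

end ineq

section cluster
variable {α : Type*} [DecidableEq α]

lemma cluster_val (F : Finset α) (hF : 3 ≤ F.card) (y : α → α → ℝ)
    (hsym : ∀ i j, y i j = y j i)
    (hE : ∀ l i j, l ∈ F → i ∈ F → j ∈ F → l ≠ i → l ≠ j → i ≠ j →
      y l i + y l j + (∑ r ∈ F.erase l, y l r) = 1 + y i j) :
    ∀ l i, l ∈ F → i ∈ F → l ≠ i → y l i = 1 / (F.card : ℝ) := by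
  classical
  set m' : ℝ := (F.card : ℝ) with hm'
  have hm3 : (3:ℝ) ≤ m' := by rw [hm']; exact_mod_cast hF
  set S : α → ℝ := fun w => ∑ r ∈ F.erase w, y w r with hS
  have dagger : ∀ l i, l ∈ F → i ∈ F → l ≠ i →
      (m' - 2) * y l i + (m' - 1) * S l - S i = m' - 2 := by
    intro l i hl hi hli
    have hiel : i ∈ F.erase l := Finset.mem_erase.2 ⟨Ne.symm hli, hi⟩
    have hlei : l ∈ F.erase i := Finset.mem_erase.2 ⟨hli, hl⟩
    have hcard2 : ((F.erase l).erase i).card = F.card - 2 := by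
      rw [Finset.card_erase_of_mem hiel, Finset.card_erase_of_mem hl]
      omega
    have hcast : ((((F.erase l).erase i).card : ℕ) : ℝ) = m' - 2 := by
      rw [hcard2, Nat.cast_sub (by omega)]
      norm_num [hm']
    have hsum1 : ∑ j ∈ (F.erase l).erase i, y l j = S l - y l i := by
      have h : y l i + ∑ x ∈ (F.erase l).erase i, y l x = S l :=
        Finset.add_sum_erase (F.erase l) (y l) hiel
      linarith
    have hsum2 : ∑ j ∈ (F.erase l).erase i, y i j = S i - y l i := by
      rw [Finset.erase_right_comm]
      have h : y i l + ∑ x ∈ (F.erase i).erase l, y i x = S i :=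
        Finset.add_sum_erase (F.erase i) (y i) hlei
      have h2 : y i l = y l i := hsym i l
      linarith
    have hsumE : ∑ j ∈ (F.erase l).erase i, (y l i + y l j + S l)
        = ∑ j ∈ (F.erase l).erase i, (1 + y i j) := by
      apply Finset.sum_congr rfl
      intro j hj
      have hj1 := Finset.mem_erase.1 hj
      have hj2 := Finset.mem_erase.1 hj1.2
      exact hE l i j hl hi hj2.2 hli (Ne.symm hj2.1) (Ne.symm hj1.1)
    simp only [Finset.sum_add_distrib, Finset.sum_const, nsmul_eq_mul, hsum1, hsum2,
      hcast, mul_one] at hsumE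
    linarith
  have hm0 : m' ≠ 0 := by linarith
  have hm2 : m' - 2 ≠ 0 := by intro h; linarith
  have Seq : ∀ l i, l ∈ F → i ∈ F → l ≠ i → S l = S i := by
    intro l i hl hi hli
    have d1 := dagger l i hl hi hli
    have d2 := dagger i l hi hl (Ne.symm hli)
    rw [hsym i l] at d2
    have key : m' * (S l - S i) = 0 := by linear_combination d1 - d2
    rcases mul_eq_zero.1 key with h | h
    · exact absurd h hm0
    · linarith
  have Sval : ∀ l, l ∈ F → m' * S l = m' - 1 := by
    intro l hl
    have hcard1 : (F.erase l).card = F.card - 1 := Finset.card_erase_of_mem hl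
    have hcast1 : (((F.erase l).card : ℕ) : ℝ) = m' - 1 := by
      rw [hcard1, Nat.cast_sub (by omega)]
      norm_num [hm']
    have hsum_d : ∑ i ∈ F.erase l, ((m' - 2) * y l i + (m' - 1) * S l - S i)
        = ∑ _i ∈ F.erase l, (m' - 2) := by
      apply Finset.sum_congr rfl
      intro i hi
      have h2 := Finset.mem_erase.1 hi
      exact dagger l i hl h2.2 (Ne.symm h2.1)
    have hsum_S : ∑ i ∈ F.erase l, S i = (m' - 1) * S l := by
      have h3 : ∀ i ∈ F.erase l, S i = S l := by
        intro i hi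
        have h2 := Finset.mem_erase.1 hi
        exact (Seq l i hl h2.2 (Ne.symm h2.1)).symm
      rw [Finset.sum_congr rfl h3, Finset.sum_const, nsmul_eq_mul, hcast1]
    have hsly : ∑ i ∈ F.erase l, y l i = S l := rfl
    simp only [Finset.sum_sub_distrib, Finset.sum_add_distrib, Finset.sum_const,
      nsmul_eq_mul, ← Finset.mul_sum, hcast1, hsly, hsum_S] at hsum_d
    have key : (m' - 2) * (m' * S l - (m' - 1)) = 0 := by linear_combination hsum_d
    rcases mul_eq_zero.1 key with h | h
    · exact absurd h hm2
    · linarith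
  intro l i hl hi hli
  have d1 := dagger l i hl hi hli
  have hSl := Sval l hl
  have hSi := Sval i hi
  have key : (m' - 2) * (m' * y l i - 1) = 0 := by
    linear_combination m' * d1 - (m' - 1) * hSl + hSi
  rcases mul_eq_zero.1 key with h | h
  · exact absurd h hm2
  · field_simp
    linarith

end cluster

section extreme
variable {n K : ℕ}

lemma lin_ent_sum (Y Z : CutSpace n) (a b : ℝ) (l : Fin n) (S : Finset (Fin n)) :
    ∑ j ∈ S, ent (a • Y + b • Z) l j
      = a * ∑ j ∈ S, ent Y l j + b * ∑ j ∈ S, ent Z l j := by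
  rw [Finset.sum_congr rfl (fun j _ => ent_comb Y Z a b l j), Finset.sum_add_distrib,
    Finset.mul_sum, Finset.mul_sum]

lemma comb_Y_eq (hn : 3 ≤ n) (hK2 : 2 ≤ K) (c : Fin n → Fin K)
    (Y Z : CutSpace n)
    (hY2 : ∀ l : Fin n, ∀ T : Finset (Fin n), l ∉ T → 2 ≤ T.card → T.card ≤ K →
      2 * ∑ j ∈ T, ent Y l j + ∑ j ∈ Finset.univ \ insert l T, ent Y l j
        ≤ 1 + pairSumOn Y T)
    (hY3 : ∀ p : PairIdx n, 0 ≤ Y p)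
    (hZ2 : ∀ l : Fin n, ∀ T : Finset (Fin n), l ∉ T → 2 ≤ T.card → T.card ≤ K →
      2 * ∑ j ∈ T, ent Z l j + ∑ j ∈ Finset.univ \ insert l T, ent Z l j
        ≤ 1 + pairSumOn Z T)
    (hZ3 : ∀ p : PairIdx n, 0 ≤ Z p)
    (a b : ℝ) (ha : 0 < a) (hb : 0 < b) (hab : a + b = 1)
    (hcomb : a • Y + b • Z = cutVec n K c) : Y = cutVec n K c := by
  classical
  set X := cutVec n K c with hX
  have hcombp : ∀ p : PairIdx n, a * Y p + b * Z p = X p := by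
    intro p
    rw [← hcomb]
    rfl
  -- step 1 : off-cluster entries of Y vanish
  have zeroY : ∀ i j : Fin n, i ≠ j → c i ≠ c j → ent Y i j = 0 := by
    intro i j hij hc
    have key : ∀ (u v : Fin n) (h : u < v), c u ≠ c v → Y ⟨(u,v), h⟩ = 0 := by
      intro u v h hc2
      have hx : X ⟨(u,v), h⟩ = 0 := by
        rw [hX, cutVec_apply c h, if_neg hc2]
      have h1 := hcombp ⟨(u,v), h⟩
      have h2 := hY3 ⟨(u,v), h⟩
      have h3 := hZ3 ⟨(u,v), h⟩
      nlinarith [mul_nonneg ha.le h2, mul_nonneg hb.le h3]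
    rcases lt_or_gt_of_ne hij with h | h
    · rw [ent_eq Y h]
      exact key i j h hc
    · rw [ent_symm, ent_eq Y h]
      exact key j i h (Ne.symm hc)
  -- tightness transfer
  have htight : ∀ (l : Fin n) (T : Finset (Fin n)), l ∉ T → 2 ≤ T.card → T.card ≤ K →
      (2 * ∑ j ∈ T, ent X l j + ∑ j ∈ Finset.univ \ insert l T, ent X l j
        = 1 + pairSumOn X T) →
      2 * ∑ j ∈ T, ent Y l j + ∑ j ∈ Finset.univ \ insert l T, ent Y l j
        = 1 + pairSumOn Y T := by
    intro l T h1 h2 h3 hXeq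
    have hYle := hY2 l T h1 h2 h3
    have hZle := hZ2 l T h1 h2 h3
    rw [← hcomb, lin_ent_sum, lin_ent_sum, pairSumOn_comb] at hXeq
    have hint1 := mul_le_mul_of_nonneg_left hYle ha.le
    have hint2 := mul_le_mul_of_nonneg_left hZle hb.le
    have h4 : a * (2 * ∑ j ∈ T, ent Y l j + ∑ j ∈ Finset.univ \ insert l T, ent Y l j)
        = a * (1 + pairSumOn Y T) := by nlinarith [hint1, hint2, hXeq]
    exact mul_left_cancel₀ ha.ne' h4
  -- tight instances at X
  have hXeqA : ∀ l i j : Fin n, l ≠ i → l ≠ j → i ≠ j → c i = c l → c j = c l →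
      2 * ∑ j' ∈ ({i, j} : Finset (Fin n)), ent X l j'
        + ∑ j' ∈ Finset.univ \ insert l ({i, j} : Finset (Fin n)), ent X l j'
        = 1 + pairSumOn X ({i, j} : Finset (Fin n)) := by
    intro l i j hli hlj hij hci hcj
    have hl : l ∉ ({i, j} : Finset (Fin n)) := by simp [Ne.symm hli, Ne.symm hlj, hli, hlj]
    rw [hX, cut_lhs c l _ hl, pairSumOn_pair_ent _ hij, entCut c hij,
      if_pos (hci.trans hcj.symm), fib_eq c hci]
    have hfil : (({i, j} : Finset (Fin n)).filter fun x => c x = c l) = {i, j} := by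
      apply Finset.filter_true_of_mem
      intro x hx
      rcases Finset.mem_insert.1 hx with rfl | hx2
      · exact hci
      · rw [Finset.mem_singleton.1 hx2]; exact hcj
    rw [hfil]
    have hcard : ({i, j} : Finset (Fin n)).card = 2 := by
      rw [Finset.card_insert_of_notMem (by simpa using hij), Finset.card_singleton]
    rw [hcard]
    have hmpos : (0:ℝ) < ((fib c l).card : ℝ) := by exact_mod_cast fib_card_pos c l
    field_simp
    ring
  have hXeqB : ∀ l i j : Fin n, l ≠ i → l ≠ j → i ≠ j → c i = c l → c j ≠ c l →
      2 * ∑ j' ∈ ({i, j} : Finset (Fin n)), ent X l j'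
        + ∑ j' ∈ Finset.univ \ insert l ({i, j} : Finset (Fin n)), ent X l j'
        = 1 + pairSumOn X ({i, j} : Finset (Fin n)) := by
    intro l i j hli hlj hij hci hcj
    have hl : l ∉ ({i, j} : Finset (Fin n)) := by simp [Ne.symm hli, Ne.symm hlj, hli, hlj]
    rw [hX, cut_lhs c l _ hl, pairSumOn_pair_ent _ hij, entCut c hij,
      if_neg (fun h => hcj (h.symm.trans hci))]
    have hfil : (({i, j} : Finset (Fin n)).filter fun x => c x = c l) = {i} := by
      ext x
      simp only [Finset.mem_filter, Finset.mem_insert, Finset.mem_singleton]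
      constructor
      · rintro ⟨rfl | rfl, h2⟩
        · rfl
        · exact absurd h2 hcj
      · rintro rfl
        exact ⟨Or.inl rfl, hci⟩
    rw [hfil, Finset.card_singleton]
    have hmpos : (0:ℝ) < ((fib c l).card : ℝ) := by exact_mod_cast fib_card_pos c l
    field_simp
    push_cast
    ring

  -- main conclusion
  funext p
  obtain ⟨⟨i, j⟩, hlt⟩ := p
  by_cases hc : c i = c j
  swap
  · have h1 : Y ⟨(i,j), hlt⟩ = ent Y i j := (ent_eq Y hlt).symm
    rw [h1, zeroY i j hlt.ne hc, hX, cutVec_apply c hlt, if_neg hc]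
  · have hY : Y ⟨(i,j), hlt⟩ = ent Y i j := (ent_eq Y hlt).symm
    have hXv : X ⟨(i,j), hlt⟩ = 1 / ((fib c i).card : ℝ) := by
      rw [hX, cutVec_apply c hlt, if_pos hc]
    have hij : i ≠ j := hlt.ne
    have hjF : j ∈ fib c i := (mem_fib c).2 hc.symm
    have hiF : i ∈ fib c i := self_mem_fib c i
    have hsub2 : ({i, j} : Finset (Fin n)) ⊆ fib c i := by
      intro x hx
      rcases Finset.mem_insert.1 hx with rfl | hx2
      · exact hiF
      · rw [Finset.mem_singleton.1 hx2]; exact hjF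
    have hcard2 : ({i, j} : Finset (Fin n)).card = 2 := by
      rw [Finset.card_insert_of_notMem (by simpa using hij), Finset.card_singleton]
    have hm2 : 2 ≤ (fib c i).card := hcard2 ▸ Finset.card_le_card hsub2
    rcases eq_or_lt_of_le hm2 with hmeq | hm3
    · -- cluster of size 2
      have hfib : fib c i = {i, j} :=
        (Finset.eq_of_subset_of_card_le hsub2 (by omega)).symm
      obtain ⟨k, hk⟩ : ∃ k, c k ≠ c i := by
        by_contra hall
        push_neg at hall
        have huniv : fib c i = Finset.univ := by
          ext x; simp [fib, hall x]
        have : (fib c i).card = n := by rw [huniv, Finset.card_univ, Fintype.card_fin]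
        omega
      have hik : i ≠ k := by rintro rfl; exact hk rfl
      have hjk : j ≠ k := by rintro rfl; exact hk hc.symm
      have hlT : i ∉ ({j, k} : Finset (Fin n)) := by simp [hij, hik]
      have hTcard : ({j, k} : Finset (Fin n)).card = 2 := by
        rw [Finset.card_insert_of_notMem (by simpa using hjk), Finset.card_singleton]
      have hEY := htight i {j, k} hlT (by omega) (by omega)
        (hXeqB i j k hij hik hjk hc.symm hk)
      rw [Finset.sum_pair hjk, pairSumOn_pair_ent Y hjk] at hEY
      have hYik : ent Y i k = 0 := zeroY i k hik (fun h => hk h.symm)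
      have hYjk : ent Y j k = 0 := zeroY j k hjk (fun h => hk (h.symm.trans hc.symm))
      have hzero : ∑ r ∈ Finset.univ \ insert i ({j, k} : Finset (Fin n)), ent Y i r = 0 := by
        apply Finset.sum_eq_zero
        intro r hr
        simp only [Finset.mem_sdiff, Finset.mem_univ, true_and, Finset.mem_insert,
          Finset.mem_singleton] at hr
        push_neg at hr
        have hcr : c i ≠ c r := by
          intro h
          have : r ∈ fib c i := (mem_fib c).2 h.symm
          rw [hfib] at this
          rcases Finset.mem_insert.1 this with rfl | h2
          · exact hr.1 rfl
          · exact hr.2.1 (Finset.mem_singleton.1 h2)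
        exact zeroY i r (fun h => hr.1 h.symm) hcr
      rw [hYik, hYjk, hzero] at hEY
      rw [hY, hXv, ← hmeq]
      norm_num
      linarith
    · -- cluster of size ≥ 3
      set F := fib c i with hFdef
      have hF3 : 3 ≤ F.card := hm3
      have hEall : ∀ l u v : Fin n, l ∈ F → u ∈ F → v ∈ F → l ≠ u → l ≠ v → u ≠ v →
          ent Y l u + ent Y l v + (∑ r ∈ F.erase l, ent Y l r) = 1 + ent Y u v := by
        intro l u v hl hu hv hlu hlv huv
        have hcl : c l = c i := (mem_fib c).1 hl
        have hcu : c u = c i := (mem_fib c).1 hu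
        have hcv : c v = c i := (mem_fib c).1 hv
        have hlT : l ∉ ({u, v} : Finset (Fin n)) := by simp [hlu, hlv]
        have hTcard : ({u, v} : Finset (Fin n)).card = 2 := by
          rw [Finset.card_insert_of_notMem (by simpa using huv), Finset.card_singleton]
        have hEY := htight l {u, v} hlT (by omega) (by omega)
          (hXeqA l u v hlu hlv huv (hcu.trans hcl.symm) (hcv.trans hcl.symm))
        rw [Finset.sum_pair huv, pairSumOn_pair_ent Y huv] at hEY
        have huF : u ∈ F.erase l := Finset.mem_erase.2 ⟨Ne.symm hlu, hu⟩
        have hvF : v ∈ (F.erase l).erase u := Finset.mem_erase.2 ⟨Ne.symm huv, Finset.mem_erase.2 ⟨Ne.symm hlv, hv⟩⟩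
        have hchain1 : ent Y l u + ∑ r ∈ (F.erase l).erase u, ent Y l r
            = ∑ r ∈ F.erase l, ent Y l r := Finset.add_sum_erase _ _ huF
        have hchain2 : ent Y l v + ∑ r ∈ ((F.erase l).erase u).erase v, ent Y l r
            = ∑ r ∈ (F.erase l).erase u, ent Y l r := Finset.add_sum_erase _ _ hvF
        have hsplit : ∑ r ∈ Finset.univ \ insert l ({u, v} : Finset (Fin n)), ent Y l r
            = ∑ r ∈ ((F.erase l).erase u).erase v, ent Y l r := by
          refine (Finset.sum_subset ?_ ?_).symm
          · intro x hx
            have h1 := Finset.mem_erase.1 hx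
            have h2 := Finset.mem_erase.1 h1.2
            have h3 := Finset.mem_erase.1 h2.2
            simp only [Finset.mem_sdiff, Finset.mem_univ, true_and, Finset.mem_insert,
              Finset.mem_singleton]
            push_neg
            exact ⟨h3.1, h2.1, h1.1⟩
          · intro x hx hx2
            simp only [Finset.mem_sdiff, Finset.mem_univ, true_and, Finset.mem_insert,
              Finset.mem_singleton] at hx
            push_neg at hx
            have hxF : x ∉ F := by
              intro hxF
              exact hx2 (Finset.mem_erase.2 ⟨hx.2.2, Finset.mem_erase.2 ⟨hx.2.1,
                Finset.mem_erase.2 ⟨hx.1, hxF⟩⟩⟩)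
            have hcx : c l ≠ c x := by
              intro h
              exact hxF ((mem_fib c).2 (h.symm.trans hcl))
            exact zeroY l x (fun h => hx.1 h.symm) hcx
        rw [hsplit] at hEY
        linarith
      have := cluster_val F hF3 (ent Y) (ent_symm Y) hEall i j hiF hjF hij
      rw [hY, this, hXv]

end extreme

/-- every ratio-cut vector of a partition of [n] into at most K
nonempty clusters is a vertex (extreme point) of RMet^K_n, and every ratio-cut
vector of a partition into exactly K nonempty clusters is a vertex of
RMet^{=K}_n. -/
theorem stmt9 (n K : ℕ) (hn : 3 ≤ n) (hK2 : 2 ≤ K) (hKn : K ≤ n) :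
    (∀ c : Fin n → Fin K, cutVec n K c ∈ Set.extremePoints ℝ (RMet n K)) ∧
    (∀ c : Fin n → Fin K, Function.Surjective c →
      cutVec n K c ∈ Set.extremePoints ℝ (RMetEq n K)) := by
  constructor
  · intro c
    rw [mem_extremePoints]
    refine ⟨⟨?_, fun l T hl _ _ => cut_ineq2 c l T hl, cutVec_nonneg c⟩, ?_⟩
    · rw [sum_cutVec c]
      have := sum_inv_fib_le c
      linarith
    · rintro Y ⟨_, hY2, hY3⟩ Z ⟨_, hZ2, hZ3⟩ ⟨a, b, ha, hb, hab, hsum⟩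
      refine ⟨comb_Y_eq hn hK2 c Y Z hY2 hY3 hZ2 hZ3 a b ha hb hab hsum, ?_⟩
      rw [add_comm] at hsum hab
      exact comb_Y_eq hn hK2 c Z Y hZ2 hZ3 hY2 hY3 b a hb ha hab hsum
  · intro c hc
    rw [mem_extremePoints]
    refine ⟨⟨?_, fun l T hl _ _ => cut_ineq2 c l T hl, cutVec_nonneg c⟩, ?_⟩
    · rw [sum_cutVec c, sum_inv_fib_eq c hc]
    · rintro Y ⟨_, hY2, hY3⟩ Z ⟨_, hZ2, hZ3⟩ ⟨a, b, ha, hb, hab, hsum⟩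
      refine ⟨comb_Y_eq hn hK2 c Y Z hY2 hY3 hZ2 hZ3 a b ha hb hab hsum, ?_⟩
      rw [add_comm] at hsum hab
      exact comb_Y_eq hn hK2 c Z Y hZ2 hZ3 hY2 hY3 b a hb ha hab hsum
end
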